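/- For all integers n and m with 0 ≤ m, the relation ∂/∂x₀ U_{n,m}^{±} = (n+m) U_{n-1,m}^{±} holds (valid both for n ≥ 1 and for n ≤ -2). -/

import Mathlib

open MeasureTheory Real

noncomputable section

/-- Euclidean space `ℝ³` with coordinates `x 0, x 1, x 2`. -/
abbrev E3 := EuclideanSpace ℝ (Fin 3)

/-- Legendre polynomial of degree `n` via Rodrigues' formula. -/
def legendreP (n : ℕ) (t : ℝ) : ℝ :=
  (1 / (2 ^ n * n.factorial : ℝ)) * iteratedDeriv n (fun s : ℝ => (s ^ 2 - 1) ^ n) t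

/-- Associated Legendre function of nonnegative integer degree `n` and order `m`
(Ferrers-type definition, no Condon–Shortley phase):
`P_n^m(t) = (1-t²)^{m/2} (d/dt)^m P_n(t)`. -/
def assocLegendreNat (n m : ℕ) (t : ℝ) : ℝ :=
  (1 - t ^ 2) ^ ((m : ℝ) / 2) * iteratedDeriv m (legendreP n) t

/-- Associated Legendre function of arbitrary integer degree, using the
reflection `P_{-n}^m = P_{n-1}^m` for negative degrees. -/
def assocLegendre (n : ℤ) (m : ℕ) (t : ℝ) : ℝ :=
  if 0 ≤ n then assocLegendreNat n.toNat m t else assocLegendreNat (-n - 1).toNat m t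

/-- Spherical radius `ρ`. -/
def sphRho (x : E3) : ℝ := Real.sqrt (x 0 ^ 2 + x 1 ^ 2 + x 2 ^ 2)

/-- Azimuthal angle `φ` of the point `(x₁, x₂)`. -/
def sphPhi (x : E3) : ℝ := Complex.arg ⟨x 1, x 2⟩

/-- Azimuthal factor `Φ_m^±(φ)`; `sgn = true` corresponds to `+` (cosine),
`sgn = false` to `−` (sine). -/
def PhiFac (m : ℕ) (sgn : Bool) (φ : ℝ) : ℝ :=
  if sgn then Real.cos (m * φ) else Real.sin (m * φ)

/-- Solid spherical harmonic `U_{n,m}^{±}(x) = ρ^n P_n^m(cos θ) Φ_m^{±}(φ)`. -/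
def solidU (n : ℤ) (m : ℕ) (sgn : Bool) (x : E3) : ℝ :=
  sphRho x ^ n * assocLegendre n m (x 0 / sphRho x) * PhiFac m sgn (sphPhi x)

/-- The exterior `B^e` of the closed unit ball in `ℝ³`. -/
def extB : Set E3 := {x : E3 | 1 < ‖x‖}

/-! ### Auxiliary polynomial layer -/

open Polynomial

def rodF (n : ℕ) : ℝ[X] := (X ^ 2 - 1) ^ n

def legPoly (n : ℕ) : ℝ[X] :=
  C ((2 ^ n * n.factorial : ℝ)⁻¹) * derivative^[n] (rodF n)

lemma iter_succ' (p : ℝ[X]) (k : ℕ) :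
    derivative^[k + 1] p = derivative (derivative^[k] p) :=
  Function.iterate_succ_apply' _ _ _

lemma linLeib (p : ℝ[X]) : ∀ k : ℕ, derivative^[k + 1] (X * p) =
    X * derivative^[k + 1] p + ((k : ℝ[X]) + 1) * derivative^[k] p := by
  intro k
  induction k with
  | zero => simp [derivative_mul]; ring
  | succ k ih =>
    rw [iter_succ', ih]
    simp only [derivative_add, derivative_mul, derivative_X, derivative_natCast,
      derivative_one, derivative_ofNat, ← iter_succ']
    push_cast
    ring

lemma rodF_deriv (n : ℕ) :
    derivative (rodF (n + 1)) = (2 * ((n : ℝ[X]) + 1)) * (X * rodF n) := by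
  simp only [rodF, derivative_pow, derivative_sub, derivative_X_pow, derivative_one,
    C_eq_natCast, map_ofNat]
  push_cast
  simp [derivative_X]
  ring

lemma rodF_base (n : ℕ) :
    (X ^ 2 - 1) * derivative (rodF n) = (2 * (n : ℝ[X])) * (X * rodF n) := by
  cases n with
  | zero => simp [rodF]
  | succ k =>
    rw [rodF_deriv]
    have h : (X ^ 2 - 1 : ℝ[X]) * rodF k = rodF (k + 1) := by
      simp [rodF, pow_succ]; ring
    push_cast
    linear_combination (2 * ((k:ℝ[X]) + 1) * X) * h

lemma lemS (n : ℕ) : ∀ k : ℕ, (X ^ 2 - 1) * derivative^[k + 2] (rodF n) =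
    (2 * ((n : ℝ[X]) - ((k : ℝ[X]) + 1))) * (X * derivative^[k + 1] (rodF n)) +
      (((k : ℝ[X]) + 1) * (2 * (n : ℝ[X]) - (k : ℝ[X]))) * derivative^[k] (rodF n) := by
  intro k
  induction k with
  | zero =>
    have h := congrArg derivative (rodF_base n)
    simp only [derivative_mul, derivative_sub, derivative_pow, derivative_X,
      derivative_one, derivative_natCast, derivative_ofNat, C_eq_natCast, map_ofNat] at h
    have e1 : derivative (derivative (rodF n)) = derivative^[0 + 2] (rodF n) := by
      simp [iter_succ']
    have e2 : derivative (rodF n) = derivative^[0 + 1] (rodF n) := by simp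
    rw [e1, e2] at h
    simp only [Nat.cast_zero, Function.iterate_zero_apply] at h ⊢
    linear_combination h
  | succ k ih =>
    have h := congrArg derivative ih
    simp only [derivative_add, derivative_mul, derivative_sub, derivative_pow, derivative_X,
      derivative_one, derivative_natCast, derivative_ofNat, C_eq_natCast, map_ofNat,
      ← iter_succ'] at h
    have e3 : k + 1 + 1 = k + 2 := rfl
    have e4 : k + 2 + 1 = k + 1 + 2 := rfl
    rw [e3, e4] at h
    push_cast at h ⊢
    linear_combination h

lemma coefEq (n : ℕ) : C ((2 ^ n * n.factorial : ℝ)⁻¹) =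
    (2 * ((n : ℝ[X]) + 1)) * C ((2 ^ (n + 1) * (n + 1).factorial : ℝ)⁻¹) := by
  have h : ((2 : ℝ) ^ n * n.factorial)⁻¹ =
      (2 * ((n : ℝ) + 1)) * ((2 ^ (n + 1) * (n + 1).factorial : ℝ))⁻¹ := by
    rw [Nat.factorial_succ]
    have h1 : (2 : ℝ) ^ n * n.factorial ≠ 0 := by positivity
    have h2 : (2 : ℝ) ^ (n + 1) * ((n + 1) * n.factorial : ℕ) ≠ 0 := by positivity
    field_simp
    push_cast
    ring
  rw [h, C_mul]
  have : C (2 * ((n : ℝ) + 1)) = (2 * ((n : ℝ[X]) + 1)) := by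
    push_cast [C_eq_natCast, C_mul, C_add, C_1, map_ofNat]
    norm_num
  rw [this]

lemma natConst (n : ℕ) : C (2 * ((n : ℝ) + 1)) = (2 * ((n : ℝ[X]) + 1)) := by
  push_cast [C_eq_natCast, C_mul, C_add, C_1, map_ofNat]
  norm_num

lemma identC (n : ℕ) : derivative (legPoly (n + 1)) =
    X * derivative (legPoly n) + ((n : ℝ[X]) + 1) * legPoly n := by
  unfold legPoly
  rw [derivative_C_mul, derivative_C_mul, ← iter_succ', ← iter_succ']
  have h1 : derivative^[n + 1 + 1] (rodF (n + 1)) =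
      derivative^[n + 1] (derivative (rodF (n + 1))) :=
    Function.iterate_succ_apply _ _ _
  rw [h1, rodF_deriv, ← natConst, iterate_derivative_C_mul, natConst, linLeib, coefEq n]
  ring

lemma identD (n : ℕ) : (X ^ 2 - 1) * derivative (legPoly n) =
    ((n : ℝ[X]) + 1) * (legPoly (n + 1) - X * legPoly n) := by
  cases n with
  | zero =>
    have h0 : legPoly 0 = 1 := by simp [legPoly, rodF]
    have h1 : legPoly 1 = X := by
      simp [legPoly, rodF, derivative_sub, derivative_pow]
      rw [← mul_assoc, ← C_mul]
      norm_num
    rw [h0, h1]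
    simp
  | succ r =>
    have h1 : derivative^[r + 1 + 1] (rodF (r + 1 + 1)) =
        derivative^[r + 1] (derivative (rodF (r + 1 + 1))) :=
      Function.iterate_succ_apply _ _ _
    rw [rodF_deriv, ← natConst, iterate_derivative_C_mul, natConst, linLeib] at h1
    have h2 := lemS (r + 1) r
    unfold legPoly
    rw [derivative_C_mul, ← iter_succ', coefEq (r + 1)]
    push_cast at h1 h2 ⊢
    linear_combination
      (2 * ((r : ℝ[X]) + 2) * C ((2 ^ (r + 1 + 1) * (r + 1 + 1).factorial : ℝ)⁻¹)) * h2 -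
      (((r : ℝ[X]) + 2) * C ((2 ^ (r + 1 + 1) * (r + 1 + 1).factorial : ℝ)⁻¹)) * h1

lemma identA (n : ℕ) : (1 - X ^ 2) * derivative (legPoly (n + 1)) =
    ((n : ℝ[X]) + 1) * (legPoly n - X * legPoly (n + 1)) := by
  linear_combination ((1 : ℝ[X]) - X ^ 2) * identC n - X * identD n

lemma lemE (n : ℕ) : ∀ m : ℕ, derivative^[m + 1] (legPoly n) =
    X * derivative^[m + 1] (legPoly (n + 1)) +
      ((m : ℝ[X]) - ((n : ℝ[X]) + 1)) * derivative^[m] (legPoly (n + 1)) := by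
  intro m
  induction m with
  | zero =>
    simp only [zero_add, Function.iterate_one, Function.iterate_zero_apply, Nat.cast_zero]
    linear_combination (-X) * identC n - identD n
  | succ m ih =>
    have h := congrArg derivative ih
    simp only [derivative_add, derivative_mul, derivative_sub, derivative_X,
      derivative_one, derivative_natCast, derivative_ofNat, C_eq_natCast, map_ofNat,
      ← iter_succ'] at h
    push_cast at h ⊢
    linear_combination h

lemma lemF (n : ℕ) : ∀ m : ℕ, derivative^[m + 1] (legPoly (n + 1)) =
    X * derivative^[m + 1] (legPoly n) +
      (((n : ℝ[X]) + 1) + (m : ℝ[X])) * derivative^[m] (legPoly n) := by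
  intro m
  induction m with
  | zero =>
    simp only [zero_add, Function.iterate_one, Function.iterate_zero_apply, Nat.cast_zero]
    linear_combination identC n
  | succ m ih =>
    have h := congrArg derivative ih
    simp only [derivative_add, derivative_mul, derivative_sub, derivative_X,
      derivative_one, derivative_natCast, derivative_ofNat, C_eq_natCast, map_ofNat,
      ← iter_succ'] at h
    push_cast at h ⊢
    linear_combination h

lemma upA (n : ℕ) : ∀ m : ℕ, (1 - X ^ 2) * derivative^[m + 1] (legPoly (n + 1)) +
    ((((n : ℝ[X]) + 1) - (m : ℝ[X])) * (X * derivative^[m] (legPoly (n + 1)))) =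
      (((n : ℝ[X]) + 1) + (m : ℝ[X])) * derivative^[m] (legPoly n) := by
  intro m
  induction m with
  | zero =>
    simp only [zero_add, Function.iterate_one, Function.iterate_zero_apply, Nat.cast_zero]
    linear_combination identA n
  | succ m ih =>
    have h := congrArg derivative ih
    simp only [derivative_add, derivative_mul, derivative_sub, derivative_X, derivative_pow,
      derivative_one, derivative_natCast, derivative_ofNat, C_eq_natCast, map_ofNat,
      ← iter_succ'] at h
    push_cast at h ⊢
    linear_combination h - lemE n m

lemma downA (n : ℕ) : ∀ m : ℕ, (1 - X ^ 2) * derivative^[m + 1] (legPoly n) -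
    (((n : ℝ[X]) + (m : ℝ[X]) + 1) * (X * derivative^[m] (legPoly n))) =
      ((m : ℝ[X]) - ((n : ℝ[X]) + 1)) * derivative^[m] (legPoly (n + 1)) := by
  intro m
  induction m with
  | zero =>
    simp only [zero_add, Function.iterate_one, Function.iterate_zero_apply, Nat.cast_zero]
    linear_combination (-1 : ℝ[X]) * identD n
  | succ m ih =>
    have h := congrArg derivative ih
    simp only [derivative_add, derivative_mul, derivative_sub, derivative_X, derivative_pow,
      derivative_one, derivative_natCast, derivative_ofNat, C_eq_natCast, map_ofNat,
      ← iter_succ'] at h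
    push_cast at h ⊢
    linear_combination h - lemF n m

/-! ### Analytic bridge -/

def legIdx (n : ℤ) : ℕ := if 0 ≤ n then n.toNat else (-n - 1).toNat

def Kfun (m : ℕ) (sgn : Bool) (x : E3) : ℝ :=
  if sgn then ((⟨x 1, x 2⟩ : ℂ) ^ m).re else ((⟨x 1, x 2⟩ : ℂ) ^ m).im

lemma itd_poly (p : ℝ[X]) : ∀ k : ℕ,
    iteratedDeriv k (fun s => p.eval s) = fun t => (derivative^[k] p).eval t := by
  intro k
  induction k with
  | zero => simp [iteratedDeriv_zero]
  | succ k ih =>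
    rw [iteratedDeriv_succ, ih]
    funext t
    rw [Function.iterate_succ_apply' derivative]
    exact Polynomial.deriv _

lemma legendreP_eq (N : ℕ) : legendreP N = fun t => (legPoly N).eval t := by
  funext t
  have h : (fun s : ℝ => (s ^ 2 - 1) ^ N) = fun s => (rodF N).eval s := by
    funext s; simp [rodF]
  rw [legendreP, h, itd_poly]
  simp [legPoly, one_div]

lemma itd_legendre (N m : ℕ) (t : ℝ) :
    iteratedDeriv m (legendreP N) t = (derivative^[m] (legPoly N)).eval t := by
  rw [legendreP_eq, itd_poly]

lemma sum_sq_pos {x : E3} (hx : x ≠ 0) : 0 < x 0 ^ 2 + x 1 ^ 2 + x 2 ^ 2 := by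
  rcases lt_or_eq_of_le (by positivity : (0:ℝ) ≤ x 0 ^ 2 + x 1 ^ 2 + x 2 ^ 2) with h | h
  · exact h
  · exfalso
    apply hx
    have h0 : x 0 = 0 := by nlinarith [sq_nonneg (x 0), sq_nonneg (x 1), sq_nonneg (x 2)]
    have h1 : x 1 = 0 := by nlinarith [sq_nonneg (x 0), sq_nonneg (x 1), sq_nonneg (x 2)]
    have h2 : x 2 = 0 := by nlinarith [sq_nonneg (x 0), sq_nonneg (x 1), sq_nonneg (x 2)]
    ext i
    fin_cases i <;> simpa

lemma Kfun_eq (m : ℕ) (sgn : Bool) (x : E3) :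
    Kfun m sgn x = Real.sqrt (x 1 ^ 2 + x 2 ^ 2) ^ m * PhiFac m sgn (sphPhi x) := by
  set z : ℂ := ⟨x 1, x 2⟩ with hz
  have habs : ‖z‖ = Real.sqrt (x 1 ^ 2 + x 2 ^ 2) := by
    rw [Complex.norm_def, Complex.normSq_mk]
    ring_nf
  have hzeq : z = (‖z‖ : ℂ) * Complex.exp (Complex.arg z * Complex.I) :=
    (Complex.norm_mul_exp_arg_mul_I z).symm
  have hpow : z ^ m = ((‖z‖ ^ m : ℝ) : ℂ) *
      Complex.exp ((m * Complex.arg z : ℝ) * Complex.I) := by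
    conv_lhs => rw [hzeq]
    rw [mul_pow, ← Complex.exp_nat_mul]
    push_cast
    ring_nf
  have hrec : (z ^ m).re = ‖z‖ ^ m * Real.cos (m * Complex.arg z) ∧
      (z ^ m).im = ‖z‖ ^ m * Real.sin (m * Complex.arg z) := by
    rw [hpow, Complex.exp_mul_I, ← Complex.ofReal_cos, ← Complex.ofReal_sin]
    constructor <;>
      simp [← Complex.ofReal_pow, ← Complex.ofReal_natCast, ← Complex.ofReal_mul,
        Complex.cos_ofReal_re, Complex.cos_ofReal_im,
        Complex.sin_ofReal_re, Complex.sin_ofReal_im]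
  have hphi : sphPhi x = Complex.arg z := rfl
  cases sgn <;> simp only [Kfun, PhiFac, ← hz] <;> simp [hrec.1, hrec.2, habs, hphi]

lemma rep (n : ℤ) (m : ℕ) (sgn : Bool) (x : E3) (hx : x ≠ 0) :
    solidU n m sgn x = sphRho x ^ (n - m) *
      (derivative^[m] (legPoly (legIdx n))).eval (x 0 / sphRho x) * Kfun m sgn x := by
  have hpos := sum_sq_pos hx
  have hρ : 0 < sphRho x := Real.sqrt_pos.mpr hpos
  have hρsq : sphRho x ^ 2 = x 0 ^ 2 + x 1 ^ 2 + x 2 ^ 2 := Real.sq_sqrt hpos.le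
  set s : ℝ := Real.sqrt (x 1 ^ 2 + x 2 ^ 2) with hs
  have hs0 : 0 ≤ s := Real.sqrt_nonneg _
  have hssq : s ^ 2 = x 1 ^ 2 + x 2 ^ 2 := Real.sq_sqrt (by positivity)
  have h1t : 1 - (x 0 / sphRho x) ^ 2 = (s / sphRho x) ^ 2 := by
    rw [div_pow, div_pow, eq_div_iff (by positivity)]
    field_simp
    nlinarith [hρsq, hssq]
  have hr : (1 - (x 0 / sphRho x) ^ 2) ^ ((m : ℝ) / 2) = (s / sphRho x) ^ m := by
    rw [h1t, show ((m : ℝ) / 2) = (1 / 2 : ℝ) * m by ring,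
      Real.rpow_mul (by positivity), ← Real.sqrt_eq_rpow,
      Real.sqrt_sq (by positivity), Real.rpow_natCast]
  have hALeg : assocLegendre n m (x 0 / sphRho x) =
      (s / sphRho x) ^ m * (derivative^[m] (legPoly (legIdx n))).eval (x 0 / sphRho x) := by
    unfold assocLegendre legIdx
    split_ifs with h
    · rw [assocLegendreNat, itd_legendre, hr]
    · rw [assocLegendreNat, itd_legendre, hr]
  rw [solidU, hALeg, Kfun_eq, ← hs]
  rw [div_pow, zpow_sub₀ hρ.ne', zpow_natCast]
  field_simp

set_option maxHeartbeats 1000000 in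
/-- `∂/∂x₀ U_{n,m}^{±} = (n+m) U_{n-1,m}^{±}`, valid both for
`n ≥ 1` and for `n ≤ -2`. -/
theorem stmt7 (n : ℤ) (m : ℕ) (sgn : Bool) (hn : 1 ≤ n ∨ n ≤ -2)
    (x : E3) (hx : x ≠ 0) :
    fderiv ℝ (solidU n m sgn) x (EuclideanSpace.single 0 1) =
      ((n + (m : ℤ) : ℤ) : ℝ) * solidU (n - 1) m sgn x := by
  have hpos := sum_sq_pos hx
  have hρ : 0 < sphRho x := Real.sqrt_pos.mpr hpos
  set N := legIdx n with hN
  set nm : ℤ := n - m with hnm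
  set P0 : E3 →L[ℝ] ℝ := EuclideanSpace.proj (0 : Fin 3) with hP0def
  set P1 : E3 →L[ℝ] ℝ := EuclideanSpace.proj (1 : Fin 3) with hP1def
  set P2 : E3 →L[ℝ] ℝ := EuclideanSpace.proj (2 : Fin 3) with hP2def
  have hP0 : HasFDerivAt (fun y : E3 => y 0) P0 x := P0.hasFDerivAt
  have hP1 : HasFDerivAt (fun y : E3 => y 1) P1 x := P1.hasFDerivAt
  have hP2 : HasFDerivAt (fun y : E3 => y 2) P2 x := P2.hasFDerivAt
  have hsq0 : HasFDerivAt (fun y : E3 => y 0 ^ 2) ((2 * x 0) • P0) x := by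
    simpa [pow_two, two_mul, add_smul] using hP0.fun_mul hP0
  have hsq1 : HasFDerivAt (fun y : E3 => y 1 ^ 2) ((2 * x 1) • P1) x := by
    simpa [pow_two, two_mul, add_smul] using hP1.fun_mul hP1
  have hsq2 : HasFDerivAt (fun y : E3 => y 2 ^ 2) ((2 * x 2) • P2) x := by
    simpa [pow_two, two_mul, add_smul] using hP2.fun_mul hP2
  set LS : E3 →L[ℝ] ℝ := (2 * x 0) • P0 + (2 * x 1) • P1 + (2 * x 2) • P2 with hLSdef
  have hS : HasFDerivAt (fun y : E3 => y 0 ^ 2 + y 1 ^ 2 + y 2 ^ 2) LS x :=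
    (hsq0.add hsq1).add hsq2
  set Lρ : E3 →L[ℝ] ℝ := (1 / (2 * sphRho x)) • LS with hLρdef
  have hρF : HasFDerivAt sphRho Lρ x := by
    exact (Real.hasDerivAt_sqrt hpos.ne').comp_hasFDerivAt x hS
  have hinv : HasFDerivAt (fun y : E3 => (sphRho y)⁻¹) ((-(sphRho x ^ 2)⁻¹) • Lρ) x := by
    have h := (hasDerivAt_inv hρ.ne').comp_hasFDerivAt x hρF
    exact h
  set Lt : E3 →L[ℝ] ℝ := x 0 • ((-(sphRho x ^ 2)⁻¹) • Lρ) + (sphRho x)⁻¹ • P0 with hLtdef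
  have htF : HasFDerivAt (fun y : E3 => y 0 * (sphRho y)⁻¹) Lt x := hP0.mul hinv
  set T : ℝ := x 0 * (sphRho x)⁻¹ with hT
  have hGF : HasFDerivAt
      (fun y : E3 => (derivative^[m] (legPoly N)).eval (y 0 * (sphRho y)⁻¹))
      (((derivative^[m + 1] (legPoly N)).eval T) • Lt) x := by
    have h := (Polynomial.hasDerivAt (derivative^[m] (legPoly N)) T).comp_hasFDerivAt x htF
    simpa [Function.comp_def, ← iter_succ'] using h
  have hzF : HasFDerivAt (fun y : E3 => sphRho y ^ nm)
      (((nm : ℝ) * sphRho x ^ (nm - 1)) • Lρ) x := by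
    have h := (hasDerivAt_zpow nm (sphRho x) (Or.inl hρ.ne')).comp_hasFDerivAt x hρF
    simpa [Function.comp_def] using h
  set zc : E3 →L[ℝ] ℂ := Complex.ofRealCLM.comp P1 + Complex.I • Complex.ofRealCLM.comp P2
    with hzcdef
  have hzcy : ∀ y : E3, zc y = ⟨y 1, y 2⟩ := by
    intro y
    apply Complex.ext <;>
      simp [hzcdef, hP1def, hP2def]
  set CR : ℂ →L[ℝ] ℝ := if sgn then Complex.reCLM else Complex.imCLM with hCRdef
  set LK : E3 →L[ℝ] ℝ := CR.comp (((m : ℂ) * zc x ^ (m - 1)) • zc) with hLKdef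
  have hKF : HasFDerivAt (Kfun m sgn) LK x := by
    have hpow := (hasDerivAt_pow m (zc x)).comp_hasFDerivAt x zc.hasFDerivAt
    have h := CR.hasFDerivAt.comp x hpow
    have hfun : (⇑CR ∘ (fun z : ℂ => z ^ m) ∘ ⇑zc) = Kfun m sgn := by
      funext y
      simp only [Function.comp_apply, hzcy y]
      cases sgn <;> simp [Kfun, hCRdef]
    rw [hfun] at h
    exact h
  have hU := (hzF.fun_mul hGF).fun_mul hKF
  have hev : solidU n m sgn =ᶠ[nhds x] (fun y : E3 =>
      sphRho y ^ nm * (derivative^[m] (legPoly N)).eval (y 0 * (sphRho y)⁻¹) *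
        Kfun m sgn y) := by
    filter_upwards [isOpen_compl_singleton.eventually_mem
      (show x ∈ ({0}ᶜ : Set E3) from hx)] with y hy
    rw [rep n m sgn y hy, div_eq_mul_inv, hN, hnm]
  rw [hev.fderiv_eq, hU.fderiv]
  have e0P0 : P0 (EuclideanSpace.single 0 1) = 1 := by
    simp [hP0def, EuclideanSpace.single_apply]
  have e0P1 : P1 (EuclideanSpace.single 0 1) = 0 := by
    simp [hP1def, EuclideanSpace.single_apply]
  have e0P2 : P2 (EuclideanSpace.single 0 1) = 0 := by
    simp [hP2def, EuclideanSpace.single_apply]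
  have hzce0 : zc (EuclideanSpace.single 0 1) = 0 := by
    apply Complex.ext <;> simp [hzcdef, e0P1, e0P2]
  simp only [ContinuousLinearMap.add_apply, ContinuousLinearMap.coe_smul', Pi.smul_apply,
    ContinuousLinearMap.comp_apply, ContinuousLinearMap.smul_apply, hzce0, e0P0, e0P1, e0P2,
    smul_eq_mul, mul_one, mul_zero, add_zero, smul_zero, map_zero, zero_add]
  have hLKe0 : LK (EuclideanSpace.single 0 1) = 0 := by
    rw [hLKdef]
    simp [hzce0]
  have hLρe0 : Lρ (EuclideanSpace.single 0 1) = T := by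
    rw [hLρdef, hLSdef]
    simp only [ContinuousLinearMap.add_apply, ContinuousLinearMap.smul_apply, e0P0, e0P1, e0P2,
      smul_eq_mul, mul_one, mul_zero, add_zero]
    rw [hT]
    field_simp
  have hLte0 : Lt (EuclideanSpace.single 0 1) = (1 - T ^ 2) * (sphRho x)⁻¹ := by
    rw [hLtdef]
    simp only [ContinuousLinearMap.add_apply, ContinuousLinearMap.smul_apply,
      ContinuousLinearMap.neg_apply, hLρe0, e0P0, smul_eq_mul, mul_one]
    rw [hT]
    have : sphRho x ≠ 0 := hρ.ne'
    field_simp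
    ring
  rw [rep (n - 1) m sgn x hx, hLKe0, hLte0, hLρe0, mul_zero, zero_add, ← hT,
    div_eq_mul_inv, ← hT, show n - 1 - (m : ℤ) = nm - 1 from by rw [hnm]; ring]
  have hcase : (1 - T ^ 2) * (derivative^[m + 1] (legPoly N)).eval T +
      (nm : ℝ) * (T * (derivative^[m] (legPoly N)).eval T) =
      ((n : ℝ) + (m : ℝ)) * (derivative^[m] (legPoly (legIdx (n - 1)))).eval T := by
    rcases hn with h1 | h2
    · obtain ⟨b, hb⟩ : ∃ b : ℕ, n = (b : ℤ) + 1 := ⟨(n - 1).toNat, by omega⟩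
      have hNb : N = b + 1 := by
        rw [hN]; unfold legIdx; rw [if_pos (show (0:ℤ) ≤ n by omega)]; omega
      have hN' : legIdx (n - 1) = b := by
        unfold legIdx; rw [if_pos (show (0:ℤ) ≤ n - 1 by omega)]; omega
      have h := congrArg (Polynomial.eval T) (upA b m)
      simp only [eval_add, eval_mul, eval_sub, eval_one, eval_pow, eval_X, eval_natCast] at h
      rw [hNb, hN']
      have hnr : (n : ℝ) = (b : ℝ) + 1 := by rw [hb]; push_cast; ring
      have hnmr : (nm : ℝ) = ((b : ℝ) + 1) - m := by rw [hnm, hb]; push_cast; ring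
      rw [hnr, hnmr]
      linear_combination h
    · obtain ⟨ν, hν⟩ : ∃ ν : ℕ, n = -(ν : ℤ) - 1 := ⟨(-n - 1).toNat, by omega⟩
      have hNb : N = ν := by
        rw [hN]; unfold legIdx; rw [if_neg (show ¬(0:ℤ) ≤ n by omega)]; omega
      have hN' : legIdx (n - 1) = ν + 1 := by
        unfold legIdx; rw [if_neg (show ¬(0:ℤ) ≤ n - 1 by omega)]; omega
      have h := congrArg (Polynomial.eval T) (downA ν m)
      simp only [eval_add, eval_mul, eval_sub, eval_one, eval_pow, eval_X, eval_natCast] at h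
      rw [hNb, hN']
      have hnr : (n : ℝ) = -(ν : ℝ) - 1 := by rw [hν]; push_cast; ring
      have hnmr : (nm : ℝ) = (-(ν : ℝ) - 1) - m := by rw [hnm, hν]; push_cast; ring
      rw [hnr, hnmr]
      linear_combination h
  have hz2 : sphRho x ^ nm = sphRho x ^ (nm - 1) * sphRho x := by
    rw [zpow_sub_one₀ hρ.ne']
    field_simp
  have hAinv : sphRho x * (sphRho x)⁻¹ = 1 := mul_inv_cancel₀ hρ.ne'
  rw [hz2, show ((n + (m : ℤ) : ℤ) : ℝ) = (n : ℝ) + (m : ℝ) from by push_cast; ring]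
  linear_combination (Kfun m sgn x * sphRho x ^ (nm - 1)) * hcase +
    (Kfun m sgn x * sphRho x ^ (nm - 1) * (1 - T ^ 2) *
      (derivative^[m + 1] (legPoly N)).eval T) * hAinv

end
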